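/- arXiv:1503.06173 — 2 statements merged into one kernel-verified Lean document; each statement's English description precedes it below -/
import Mathlib

section
/- For every nonnegative integer n, J_{n+1}^0 = \sum_{s=0}^{n} \binom{n}{s} J_s^1, i.e. the Fubini number of n+1 equals the binomial transform of the one-bar barred preferential arrangement numbers. -/
open Finset

/-- Stirling numbers of the second kind. -/
def stirling2 : ℕ → ℕ → ℕ
  | 0, 0 => 1
  | 0, _ + 1 => 0
  | _ + 1, 0 => 0
  | n + 1, k + 1 => (k + 1) * stirling2 n (k + 1) + stirling2 n k

/-- Fubini numbers: number of preferential arrangements of an n-set. -/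
def fubini (n : ℕ) : ℕ := ∑ s ∈ range (n + 1), stirling2 n s * s.factorial

/-- Number of barred preferential arrangements of an n-set with m bars. -/
def barred (n m : ℕ) : ℕ :=
  ∑ s ∈ range (n + 1), stirling2 n s * s.factorial * (m + s).choose m

/-- Number of restricted barred preferential arrangements. -/
def restrictedBarred (n m : ℕ) : ℕ :=
  ∑ s ∈ range (n + 1), n.choose s * m ^ s * fubini (n - s)

lemma stirling2_eq_zero : ∀ n k, n < k → stirling2 n k = 0
  | 0, _ + 1, _ => rfl
  | n + 1, k + 1, h => by
    show (k + 1) * stirling2 n (k + 1) + stirling2 n k = 0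
    rw [stirling2_eq_zero n (k + 1) (by omega), stirling2_eq_zero n k (by omega)]
    ring

lemma stirling2_succ_zero (n : ℕ) : stirling2 (n + 1) 0 = 0 := rfl

lemma sum_choose_stirling2 : ∀ (n k : ℕ),
    ∑ s ∈ range (n + 1), n.choose s * stirling2 s k = stirling2 (n + 1) (k + 1) := by
  intro n
  induction n with
  | zero =>
    intro k
    cases k <;> simp [stirling2]
  | succ n ih =>
    intro k
    have hA : ∑ s ∈ range (n + 2), (n + 1).choose s * stirling2 s k
        = (∑ t ∈ range (n + 1), n.choose t * stirling2 (t + 1) k)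
          + ∑ s ∈ range (n + 2), n.choose s * stirling2 s k := by
      rw [Finset.sum_range_succ' (fun s => (n + 1).choose s * stirling2 s k),
          Finset.sum_range_succ' (fun s => n.choose s * stirling2 s k)]
      simp only [Nat.choose_succ_succ, add_mul, Nat.choose_zero_right]
      rw [Finset.sum_add_distrib]
      ring
    have hB : ∑ s ∈ range (n + 2), n.choose s * stirling2 s k = stirling2 (n + 1) (k + 1) := by
      rw [Finset.sum_range_succ, Nat.choose_succ_self, zero_mul, add_zero, ih]
    rw [hA, hB]
    cases k with
    | zero =>
      have hz : ∀ t, stirling2 (t + 1) 0 = 0 := fun t => rfl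
      simp only [hz, mul_zero, Finset.sum_const_zero, zero_add]
      show stirling2 (n + 1) 1 = 1 * stirling2 (n + 1) 1 + stirling2 (n + 1) 0
      rw [stirling2_succ_zero]
      ring
    | succ k =>
      have hs : ∑ t ∈ range (n + 1), n.choose t * stirling2 (t + 1) (k + 1)
          = (k + 1) * (∑ t ∈ range (n + 1), n.choose t * stirling2 t (k + 1))
            + ∑ t ∈ range (n + 1), n.choose t * stirling2 t k := by
        rw [Finset.mul_sum, ← Finset.sum_add_distrib]
        refine Finset.sum_congr rfl fun t _ => ?_
        show n.choose t * ((k + 1) * stirling2 t (k + 1) + stirling2 t k) = _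
        ring
      rw [hs, ih, ih]
      show _ = (k + 1 + 1) * stirling2 (n + 1) (k + 1 + 1) + stirling2 (n + 1) (k + 1)
      ring

theorem fubini_succ_eq_binomial_transform (n : ℕ) :
    barred (n + 1) 0 = ∑ s ∈ range (n + 1), n.choose s * barred s 1 := by
  have hR : ∀ s, s ∈ range (n + 1) →
      n.choose s * barred s 1
        = ∑ k ∈ range (n + 1), (n.choose s * stirling2 s k) * (k.factorial * (1 + k)) := by
    intro s hs
    rw [Finset.mem_range] at hs
    unfold barred
    rw [Finset.mul_sum]
    rw [Finset.sum_subset (Finset.range_subset_range.2 (by omega : s + 1 ≤ n + 1))]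
    · refine Finset.sum_congr rfl fun k _ => ?_
      rw [Nat.choose_one_right]
      ring
    · intro k _ hk
      rw [Finset.mem_range, not_lt] at hk
      rw [stirling2_eq_zero s k (by omega)]
      ring
  rw [Finset.sum_congr rfl hR, Finset.sum_comm]
  unfold barred
  simp only [zero_add, Nat.choose_zero_right, mul_one]
  rw [Finset.sum_range_succ' (fun s => stirling2 (n + 1) s * s.factorial)]
  rw [stirling2_succ_zero, zero_mul, add_zero]
  refine Finset.sum_congr rfl fun k _ => ?_
  rw [← Finset.sum_mul, sum_choose_stirling2]
  rw [Nat.factorial_succ]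
  ring
end

section
/- For all nonnegative integers m and n, 2 I_n^m - m^n = I_n^{m+1}, where I_n^m = \sum_{s=0}^{n} \binom{n}{s} m^s J_{n-s} and J_r is the Fubini number. (Equivalently, I_n^{m+1} + m^n = 2 I_n^m.) -/
open Finset

/-- Surjection numbers. -/
def surj (n k : ℕ) : ℕ := stirling2 n k * k.factorial

lemma stirling2_succ_one (n : ℕ) : stirling2 (n + 1) 1 = 1 := by
  induction n with
  | zero => rfl
  | succ n ih =>
    show 1 * stirling2 (n + 1) 1 + stirling2 (n + 1) 0 = 1
    rw [ih, stirling2_succ_zero]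

lemma stirling2_eq_zero_of_lt : ∀ n k : ℕ, n < k → stirling2 n k = 0 := by
  intro n
  induction n with
  | zero => intro k hk; cases k with
    | zero => omega
    | succ k => rfl
  | succ n ih =>
    intro k hk
    cases k with
    | zero => omega
    | succ k =>
      show (k + 1) * stirling2 n (k + 1) + stirling2 n k = 0
      rw [ih (k + 1) (by omega), ih k (by omega)]
      ring

lemma surj_zero : ∀ n : ℕ, surj n 0 = if n = 0 then 1 else 0 := by
  intro n; cases n with
  | zero => rfl
  | succ n => simp [surj, stirling2_succ_zero]

lemma surj_succ_succ (n k : ℕ) :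
    surj (n + 1) (k + 1) = (k + 1) * (surj n (k + 1) + surj n k) := by
  show ((k + 1) * stirling2 n (k + 1) + stirling2 n k) * (k + 1).factorial = _
  unfold surj
  rw [Nat.factorial_succ]
  ring

lemma surj_succ_one (n : ℕ) : surj (n + 1) 1 = 1 := by
  simp [surj, stirling2_succ_one]

/-- Key decomposition of surjection numbers. -/
lemma surj_key : ∀ n t : ℕ,
    surj (n + 1) (t + 1) = ∑ j ∈ range (n + 1), (n + 1).choose j * surj j t := by
  intro n
  induction n with
  | zero =>
    intro t
    cases t with
    | zero => decide
    | succ t =>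
      rw [surj_succ_succ]
      simp [surj, stirling2_eq_zero_of_lt 0 (t + 1) (by omega),
        stirling2_eq_zero_of_lt 0 (t + 2) (by omega)]
  | succ n ih =>
    intro t
    have pas : ∀ j : ℕ, (n + 2).choose (j + 1) = (n + 1).choose j + (n + 1).choose (j + 1) :=
      fun j => Nat.choose_succ_succ (n + 1) j
    -- RHS manipulation
    have hsplit : ∑ j ∈ range (n + 2), (n + 2).choose j * surj j t
        = (∑ j ∈ range (n + 1), (n + 1).choose j * surj j t) + surj (n + 1) t
          + ∑ j ∈ range (n + 1), (n + 1).choose j * surj (j + 1) t := by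
      rw [Finset.sum_range_succ' (fun j => (n + 2).choose j * surj j t) (n + 1)]
      have : ∀ j ∈ range (n + 1),
          (n + 2).choose (j + 1) * surj (j + 1) t
            = (n + 1).choose (j + 1) * surj (j + 1) t + (n + 1).choose j * surj (j + 1) t := by
        intro j hj; rw [pas j]; ring
      rw [Finset.sum_congr rfl this, Finset.sum_add_distrib]
      have h2 : ∑ j ∈ range (n + 2), (n + 1).choose j * surj j t
          = (∑ j ∈ range (n + 1), (n + 1).choose (j + 1) * surj (j + 1) t) + surj 0 t := by
        rw [Finset.sum_range_succ' (fun j => (n + 1).choose j * surj j t) (n + 1)]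
        simp
      have h3 : ∑ j ∈ range (n + 2), (n + 1).choose j * surj j t
          = (∑ j ∈ range (n + 1), (n + 1).choose j * surj j t) + surj (n + 1) t := by
        rw [Finset.sum_range_succ]
        simp
      simp only [Nat.choose_zero_right, one_mul] at h2 ⊢
      omega
    rw [hsplit, ← ih t]
    cases t with
    | zero =>
      have hz : ∑ j ∈ range (n + 1), (n + 1).choose j * surj (j + 1) 0 = 0 := by
        apply Finset.sum_eq_zero
        intro j hj
        rw [surj_zero]
        simp
      rw [hz, surj_succ_one, surj_succ_one, surj_zero]
      simp
    | succ s =>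
      have hsum : ∑ j ∈ range (n + 1), (n + 1).choose j * surj (j + 1) (s + 1)
          = (s + 1) * ((∑ j ∈ range (n + 1), (n + 1).choose j * surj j (s + 1))
              + ∑ j ∈ range (n + 1), (n + 1).choose j * surj j s) := by
        rw [Nat.mul_add, Finset.mul_sum, Finset.mul_sum, ← Finset.sum_add_distrib]
        apply Finset.sum_congr rfl
        intro j hj
        rw [surj_succ_succ]
        ring
      rw [hsum, ← ih (s + 1), ← ih s, surj_succ_succ (n + 1) (s + 1), surj_succ_succ n s]
      ring

lemma fubini_eq_sum_surj (n : ℕ) : fubini n = ∑ t ∈ range (n + 1), surj n t := rfl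

lemma sum_surj_ext {n N : ℕ} (h : n + 1 ≤ N) : ∑ t ∈ range N, surj n t = fubini n := by
  rw [fubini_eq_sum_surj]
  symm
  apply Finset.sum_subset
  · intro x hx; simp at hx ⊢; omega
  · intro x _ hx
    simp at hx
    unfold surj
    rw [stirling2_eq_zero_of_lt n x (by omega)]
    ring

/-- Fubini recurrence. -/
lemma fubini_succ (n : ℕ) :
    fubini (n + 1) = ∑ j ∈ range (n + 1), (n + 1).choose j * fubini j := by
  rw [fubini_eq_sum_surj, Finset.sum_range_succ' (fun t => surj (n + 1) t) (n + 1)]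
  rw [surj_zero]
  simp only [Nat.succ_ne_zero, if_false, add_zero]
  have : ∀ t ∈ range (n + 1), surj (n + 1) (t + 1)
      = ∑ j ∈ range (n + 1), (n + 1).choose j * surj j t := fun t _ => surj_key n t
  rw [Finset.sum_congr rfl this, Finset.sum_comm]
  apply Finset.sum_congr rfl
  intro j hj
  rw [← Finset.mul_sum, sum_surj_ext (by simp at hj; omega)]

lemma two_fubini (r : ℕ) :
    2 * fubini r = (∑ k ∈ range (r + 1), r.choose k * fubini k) + (if r = 0 then 1 else 0) := by
  cases r with
  | zero => simp [fubini, stirling2]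
  | succ n =>
    rw [Finset.sum_range_succ, ← fubini_succ]
    simp
    ring

/-- Double sum triangle reindexing. -/
lemma sum_triangle (f : ℕ → ℕ → ℕ) : ∀ N : ℕ,
    ∑ s ∈ range N, ∑ u ∈ range (N - s), f s u
      = ∑ t ∈ range N, ∑ s ∈ range (t + 1), f s (t - s) := by
  intro N
  induction N with
  | zero => simp
  | succ N ih =>
    have step : ∀ s ∈ range (N + 1),
        ∑ u ∈ range (N + 1 - s), f s u
          = (∑ u ∈ range (N - s), f s u) + f s (N - s) := by
      intro s hs
      simp at hs
      have : N + 1 - s = (N - s) + 1 := by omega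
      rw [this, Finset.sum_range_succ]
    rw [Finset.sum_congr rfl step, Finset.sum_add_distrib]
    have h1 : ∑ s ∈ range (N + 1), ∑ u ∈ range (N - s), f s u
        = ∑ s ∈ range N, ∑ u ∈ range (N - s), f s u := by
      rw [Finset.sum_range_succ]
      simp
    rw [h1, ih, Finset.sum_range_succ (fun t => ∑ s ∈ range (t + 1), f s (t - s)) N,
      Finset.sum_range_succ (fun s => f s (N - s)) N]

theorem restricted_recurrence (m n : ℕ) :
    restrictedBarred n (m + 1) + m ^ n = 2 * restrictedBarred n m := by
  unfold restrictedBarred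
  rw [Finset.mul_sum]
  have expand : ∀ s ∈ range (n + 1),
      2 * (n.choose s * m ^ s * fubini (n - s))
        = (∑ u ∈ range (n + 1 - s), n.choose s * m ^ s * ((n - s).choose u * fubini (n - s - u)))
          + n.choose s * m ^ s * (if n - s = 0 then 1 else 0) := by
    intro s hs
    simp at hs
    have h1 : 2 * (n.choose s * m ^ s * fubini (n - s))
        = n.choose s * m ^ s * (2 * fubini (n - s)) := by ring
    rw [h1, two_fubini (n - s), Nat.mul_add, Finset.mul_sum]
    congr 1
    -- reflect the inner sum
    have hr : n + 1 - s = (n - s) + 1 := by omega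
    rw [hr]
    rw [← Finset.sum_range_reflect (fun k => n.choose s * m ^ s * ((n - s).choose k * fubini k))
      ((n - s) + 1)]
    apply Finset.sum_congr rfl
    intro k hk
    simp only [mem_range] at hk
    have hk' : k ≤ n - s := by omega
    have h2 : n - s + 1 - 1 - k = n - s - k := by omega
    simp only [h2, Nat.choose_symm hk']
  rw [Finset.sum_congr rfl expand, Finset.sum_add_distrib]
  have hlast : ∑ s ∈ range (n + 1), n.choose s * m ^ s * (if n - s = 0 then 1 else 0)
      = m ^ n := by
    rw [Finset.sum_eq_single n]
    · simp
    · intro s hs hne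
      simp at hs
      have : n - s ≠ 0 := by omega
      simp [this]
    · intro h; simp at h
  rw [hlast]
  congr 1
  -- triangle swap
  rw [sum_triangle (fun s u => n.choose s * m ^ s * ((n - s).choose u * fubini (n - s - u)))
    (n + 1)]
  apply Finset.sum_congr rfl
  intro t ht
  simp at ht
  have inner : ∀ s ∈ range (t + 1),
      n.choose s * m ^ s * ((n - s).choose (t - s) * fubini (n - s - (t - s)))
        = n.choose t * fubini (n - t) * (t.choose s * m ^ s) := by
    intro s hs
    simp at hs
    have h1 : n - s - (t - s) = n - t := by omega
    have h2 : n.choose s * (n - s).choose (t - s) = n.choose t * t.choose s := by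
      rw [← Nat.choose_mul (by omega : s ≤ t)]
    rw [h1]
    calc n.choose s * m ^ s * ((n - s).choose (t - s) * fubini (n - t))
        = n.choose s * (n - s).choose (t - s) * (m ^ s * fubini (n - t)) := by ring
      _ = n.choose t * t.choose s * (m ^ s * fubini (n - t)) := by rw [h2]
      _ = n.choose t * fubini (n - t) * (t.choose s * m ^ s) := by ring
  rw [Finset.sum_congr rfl inner, ← Finset.mul_sum]
  have hpow : ∑ s ∈ range (t + 1), t.choose s * m ^ s = (m + 1) ^ t := by
    have := add_pow m 1 t
    simp at this
    rw [this]
    apply Finset.sum_congr rfl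
    intro s _
    ring
  rw [hpow]
  ring
end
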